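/- Let φ ∈ C²(Ω), x ∈ Ω with B̄_ε(x) ⊂ Ω, and let x̄_ε ∈ argmin_{B̄_ε(x)} φ. Then max_{B̄_ε(x)} φ + min_{B̄_ε(x)} φ − 2φ(x) ≥ ⟨D²φ(x)(x̄_ε − x), (x̄_ε − x)⟩ + o(ε²) as ε → 0⁺. -/

import Mathlib

set_option maxHeartbeats 1000000


open MeasureTheory Metric Set Filter Topology Asymptotics

/-- Uniform second-order Taylor estimate for a `C²` function on an open set. -/
lemma uniform_quadratic_taylor {E : Type*} [NormedAddCommGroup E] [NormedSpace ℝ E]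
    (Ω : Set E) (hΩ : IsOpen Ω) (φ : E → ℝ) (hφ : ContDiffOn ℝ 2 φ Ω)
    (x : E) (hx : x ∈ Ω) (δ : ℝ) (hδ : 0 < δ) :
    ∃ r > 0, ∀ ε ∈ Set.Ioc (0:ℝ) r, ∀ y ∈ closedBall x ε,
      |φ y - φ x - fderiv ℝ φ x (y - x)
        - (1/2) * fderiv ℝ (fderiv ℝ φ) x (y - x) (y - x)| ≤ δ * ε ^ 2 := by
  set f := fderiv ℝ φ with hf
  set B := fderiv ℝ f x with hBdef
  -- differentiability of φ on Ω
  have hder : ∀ y ∈ Ω, HasFDerivAt φ (f y) y := fun y hy =>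
    (((hφ.contDiffAt (hΩ.mem_nhds hy)).differentiableAt two_ne_zero).hasFDerivAt)
  -- f is differentiable at x with derivative B
  have hB : HasFDerivAt f B x := by
    have h1 : ContDiffAt ℝ 1 f x :=
      (hφ.contDiffAt (hΩ.mem_nhds hx)).fderiv_right (by norm_num)
    exact (h1.differentiableAt one_ne_zero).hasFDerivAt
  -- symmetry of B
  have hsymm : ∀ v w : E, B v w = B w v := by
    intro v w
    refine second_derivative_symmetric_of_eventually (f := φ) (f' := f) ?_ hB v w
    filter_upwards [hΩ.mem_nhds hx] with y hy using hder y hy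
  -- quantitative bound from differentiability of f at x
  have hlo := isLittleO_iff.1 hB.isLittleO hδ
  rcases Metric.eventually_nhds_iff.1 hlo with ⟨r₁, hr₁pos, hr₁⟩
  rcases Metric.isOpen_iff.1 hΩ x hx with ⟨r₂, hr₂pos, hr₂⟩
  refine ⟨min (r₁ / 2) (r₂ / 2), by positivity, ?_⟩
  rintro ε ⟨hε0, hεr⟩ y hy
  have hεr₁ : ε < r₁ := lt_of_le_of_lt (hεr.trans (min_le_left _ _)) (by linarith)
  have hεr₂ : ε < r₂ := lt_of_le_of_lt (hεr.trans (min_le_right _ _)) (by linarith)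
  have hsub : closedBall x ε ⊆ Ω := fun z hz =>
    hr₂ (lt_of_le_of_lt (mem_closedBall.1 hz) hεr₂)
  -- the auxiliary function g
  set g : E → ℝ := fun z => φ z - f x (z - x) - (1/2) * B (z - x) (z - x) with hg
  -- derivative of g on the closed ball
  have hgder : ∀ z ∈ closedBall x ε,
      HasFDerivWithinAt g (f z - f x - B (z - x)) (closedBall x ε) z := by
    intro z hz
    have h1 : HasFDerivAt (fun w : E => w - x) (ContinuousLinearMap.id ℝ E) z :=
      (hasFDerivAt_id z).sub_const x
    have h2 : HasFDerivAt (fun w : E => f x (w - x)) (f x) z := by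
      have := (f x).hasFDerivAt.comp z h1
      simpa [Function.comp_def, map_sub] using this
    have bb := B.isBoundedBilinearMap
    have h3 : HasFDerivAt (fun w : E => B (w - x) (w - x))
        ((bb.deriv (z - x, z - x)).comp
          ((ContinuousLinearMap.id ℝ E).prod (ContinuousLinearMap.id ℝ E))) z := by
      have hpair : HasFDerivAt (fun w : E => ((w - x, w - x) : E × E))
          ((ContinuousLinearMap.id ℝ E).prod (ContinuousLinearMap.id ℝ E)) z :=
        HasFDerivAt.prodMk h1 h1
      exact (bb.hasFDerivAt (z - x, z - x)).comp z hpair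
    have h4 : HasFDerivAt g (f z - f x - (1/2 : ℝ) •
        ((bb.deriv (z - x, z - x)).comp
          ((ContinuousLinearMap.id ℝ E).prod (ContinuousLinearMap.id ℝ E)))) z :=
      ((hder z (hsub hz)).sub h2).sub (h3.const_mul (1/2))
    have heq : (f z - f x - (1/2 : ℝ) •
        ((bb.deriv (z - x, z - x)).comp
          ((ContinuousLinearMap.id ℝ E).prod (ContinuousLinearMap.id ℝ E))))
        = f z - f x - B (z - x) := by
      ext w
      have : bb.deriv (z - x, z - x) (w, w) = B (z - x) w + B w (z - x) := by
        simp [IsBoundedBilinearMap.deriv_apply]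
      simp only [ContinuousLinearMap.sub_apply, ContinuousLinearMap.smul_apply,
        ContinuousLinearMap.comp_apply, ContinuousLinearMap.prod_apply,
        ContinuousLinearMap.id_apply, this, hsymm w (z - x), smul_eq_mul]
      ring
    rw [heq] at h4
    exact h4.hasFDerivWithinAt
  -- bound on derivative of g
  have hbound : ∀ z ∈ closedBall x ε, ‖f z - f x - B (z - x)‖ ≤ δ * ε := by
    intro z hz
    have hdist : dist z x < r₁ := lt_of_le_of_lt (mem_closedBall.1 hz) hεr₁
    calc ‖f z - f x - B (z - x)‖ ≤ δ * ‖z - x‖ := hr₁ hdist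
      _ ≤ δ * ε := by
          have : ‖z - x‖ ≤ ε := by rwa [← dist_eq_norm]
          exact mul_le_mul_of_nonneg_left this hδ.le
  have key := (convex_closedBall x ε).norm_image_sub_le_of_norm_hasFDerivWithin_le
    hgder hbound (mem_closedBall_self hε0.le) hy
  have hgx : g x = φ x := by simp [hg]
  have hyx : ‖y - x‖ ≤ ε := by rwa [← dist_eq_norm, ← mem_closedBall]
  calc |φ y - φ x - fderiv ℝ φ x (y - x) - (1/2) * B (y - x) (y - x)|
      = ‖g y - g x‖ := by
        rw [Real.norm_eq_abs, hgx]
        congr 1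
        simp only [hg]
        ring
    _ ≤ δ * ε * ‖y - x‖ := key
    _ ≤ δ * ε ^ 2 := by
        rw [pow_two, ← mul_assoc]
        exact mul_le_mul_of_nonneg_left hyx (mul_nonneg hδ.le hε0.le)

/-- `max φ + min φ − 2φ(x) ≥ ⟨D²φ(x)(x̄_ε−x), x̄_ε−x⟩ + o(ε²)` on closed balls,
where `x̄_ε` is a minimizer of `φ` over `B̄_ε(x)`: the negative part of the
difference is `o(ε²)` as `ε → 0⁺`. -/
theorem minmax_second_order_estimate {N : ℕ}
    (Ω : Set (EuclideanSpace ℝ (Fin N))) (hΩ : IsOpen Ω)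
    (φ : EuclideanSpace ℝ (Fin N) → ℝ) (hφ : ContDiffOn ℝ 2 φ Ω)
    (x : EuclideanSpace ℝ (Fin N)) (hx : x ∈ Ω)
    (ε₁ : ℝ) (hε₁ : 0 < ε₁) (hball : closedBall x ε₁ ⊆ Ω)
    (xb : ℝ → EuclideanSpace ℝ (Fin N))
    (hxb : ∀ ε ∈ Set.Ioc (0:ℝ) ε₁, xb ε ∈ closedBall x ε ∧
      IsMinOn φ (closedBall x ε) (xb ε)) :
    (fun ε : ℝ => max ((iteratedFDeriv ℝ 2 φ x ![xb ε - x, xb ε - x])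
        - (sSup (φ '' closedBall x ε) + sInf (φ '' closedBall x ε) - 2 * φ x)) 0)
      =o[𝓝[>] (0 : ℝ)] fun ε => ε ^ 2 := by
  rw [isLittleO_iff]
  intro c hc
  obtain ⟨r, hrpos, hr⟩ := uniform_quadratic_taylor Ω hΩ φ hφ x hx (c/2) (by positivity)
  have hmem : Set.Ioo (0:ℝ) (min r ε₁) ∈ 𝓝[>] (0:ℝ) :=
    Ioo_mem_nhdsGT_of_mem ⟨le_refl _, lt_min hrpos hε₁⟩
  filter_upwards [hmem] with ε hε
  obtain ⟨hε0, hεm⟩ := hε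
  have hεr : ε ≤ r := (le_of_lt hεm).trans (min_le_left _ _)
  have hεε₁ : ε ≤ ε₁ := (le_of_lt hεm).trans (min_le_right _ _)
  obtain ⟨hy₁mem, hy₁min⟩ := hxb ε ⟨hε0, hεε₁⟩
  set y₁ := xb ε with hy₁
  set h := y₁ - x with hh
  set y₂ := x + (x - y₁) with hy₂def
  have hy₂mem : y₂ ∈ closedBall x ε := by
    simp only [hy₂def, mem_closedBall, dist_eq_norm, add_sub_cancel_left]
    have := mem_closedBall.1 hy₁mem
    rw [dist_eq_norm] at this
    rwa [norm_sub_rev]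
  have hcont : ContinuousOn φ (closedBall x ε) :=
    hφ.continuousOn.mono ((closedBall_subset_closedBall hεε₁).trans hball)
  -- sInf and sSup facts
  have hInf : sInf (φ '' closedBall x ε) = φ y₁ := by
    refine IsLeast.csInf_eq ⟨mem_image_of_mem _ hy₁mem, ?_⟩
    rintro _ ⟨z, hz, rfl⟩
    exact hy₁min hz
  have hSup : φ y₂ ≤ sSup (φ '' closedBall x ε) :=
    le_csSup ((isCompact_closedBall x ε).bddAbove_image hcont) (mem_image_of_mem _ hy₂mem)
  -- Taylor bounds
  have hT₁ := hr ε ⟨hε0, hεr⟩ y₁ hy₁mem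
  have hT₂ := hr ε ⟨hε0, hεr⟩ y₂ hy₂mem
  have hy₂x : y₂ - x = -(y₁ - x) := by rw [hy₂def]; abel
  rw [hy₂x] at hT₂
  -- rewrite the second derivative term
  have hQ : iteratedFDeriv ℝ 2 φ x ![h, h] = fderiv ℝ (fderiv ℝ φ) x h h := by
    rw [iteratedFDeriv_two_apply]
    simp
  set B := fderiv ℝ (fderiv ℝ φ) x with hB
  set L := fderiv ℝ φ x with hL
  -- main inequality
  have hkey : B h h - (sSup (φ '' closedBall x ε) + sInf (φ '' closedBall x ε) - 2 * φ x)
      ≤ c * ε ^ 2 := by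
    rw [hInf]
    have h1 : |φ y₁ - φ x - L h - (1/2) * B h h| ≤ c/2 * ε ^ 2 := hT₁
    have h2 : |φ y₂ - φ x - L (-h) - (1/2) * B (-h) (-h)| ≤ c/2 * ε ^ 2 := hT₂
    have hLneg : L (-h) = -(L h) := by simp
    have hBneg : B (-h) (-h) = B h h := by simp
    rw [hLneg, hBneg] at h2
    have e1 := abs_le.1 h1
    have e2 := abs_le.1 h2
    have := hSup
    nlinarith [e1.1, e2.1]
  have hnn : (0:ℝ) ≤ c * ε ^ 2 := by positivity
  rw [hQ]
  rw [Real.norm_eq_abs, abs_of_nonneg (le_max_right _ _)]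
  rw [max_le_iff]
  have hnorm : ‖ε ^ 2‖ = ε ^ 2 := by
    rw [Real.norm_eq_abs, abs_of_nonneg (by positivity)]
  refine ⟨?_, by rw [hnorm]; exact hnn⟩
  · calc B h h - _ ≤ c * ε ^ 2 := hkey
      _ ≤ c * ‖ε ^ 2‖ := by rw [Real.norm_eq_abs, abs_of_nonneg (by positivity)]
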